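/- Let Λ be a linearly independent set of at least two positive roots, fix γ ∈ Λ, and let Λ_γ = Λ \ {γ}. For each connected component A of V \ ⋃_{β∈Λ_γ} H_{β,1}, choose a point v_A ∈ A ∩ H_{γ,1}. Then the intersection of Int(Λ) = ⋂_{β∈Λ} H_{β,1} with the convex hull of the points {v_A} is nonempty. -/

import Mathlib

open RealInnerProductSpace

variable {V : Type*} [NormedAddCommGroup V] [InnerProductSpace ℝ V]

/-- The root order: `β ≤ γ` iff `γ - β` is a nonnegative real combination of simple roots. -/
def rle {n : ℕ} (α : Fin n → V) (β γ : V) : Prop :=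
  ∃ c : Fin n → ℝ, (∀ i, 0 ≤ c i) ∧ γ - β = ∑ i, c i • α i

/-- The open dominant chamber. -/
def chamber {n : ℕ} (α : Fin n → V) : Set V :=
  {v | ∀ i, 0 < ⟪v, α i⟫}

/-- Antichain in the root order: pairwise incomparable. -/
def RootAntichain {n : ℕ} (α : Fin n → V) (Λ : Set V) : Prop :=
  ∀ β ∈ Λ, ∀ γ ∈ Λ, (rle α β γ ∨ rle α γ β) → β = γ

/-- Increasing set (dual order ideal) in the positive root poset. -/
def IncreasingIn {n : ℕ} (α : Fin n → V) (Φpos I : Set V) : Prop :=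
  ∀ β ∈ I, ∀ γ ∈ Φpos, rle α β γ → γ ∈ I

/-- Minimal elements of a set in the root order. -/
def rminimals {n : ℕ} (α : Fin n → V) (I : Set V) : Set V :=
  {β ∈ I | ∀ γ ∈ I, rle α γ β → γ = β}

/-- Maximal elements of a set in the root order. -/
def rmaximals {n : ℕ} (α : Fin n → V) (S : Set V) : Set V :=
  {β ∈ S | ∀ γ ∈ S, rle α β γ → γ = β}

/-- The region `R_I` determined by an increasing set `I`. -/
def regionOf {n : ℕ} (α : Fin n → V) (Φpos I : Set V) : Set V :=
  {v ∈ chamber α | (∀ β ∈ I, 1 < ⟪v, β⟫) ∧ ∀ γ ∈ Φpos \ I, ⟪v, γ⟫ < 1}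

/-- The union of the hyperplanes of the Catalan arrangement. -/
def catHyperplanes (Φpos : Set V) : Set V :=
  ⋃ β ∈ Φpos, {v : V | ⟪v, β⟫ = -1 ∨ ⟪v, β⟫ = 0 ∨ ⟪v, β⟫ = 1}

/-- Complement of the union of the affine hyperplanes `(v, β) = 1`, `β ∈ Λ`. -/
def hyperU (Λ : Finset V) : Set V :=
  (⋃ β ∈ Λ, {v : V | ⟪v, β⟫ = 1})ᶜ

/-- The open sign chamber of the arrangement `{H_{β,1}}` determined by signs `s`. -/
def signChamber (Λ : Finset V) (s : V → Bool) : Set V :=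
  ⋂ β ∈ Λ, if s β then {v : V | 1 < ⟪v, β⟫} else {v : V | ⟪v, β⟫ < 1}



lemma exists_inner_eq_aux {ι : Type*} [Fintype ι] (f : ι → V)
    (hf : LinearIndependent ℝ f) (c : ι → ℝ) : ∃ x : V, ∀ i, ⟪x, f i⟫ = c i := by
  classical
  set W := Submodule.span ℝ (Set.range f) with hW
  haveI : FiniteDimensional ℝ W := FiniteDimensional.span_of_finite ℝ (Set.finite_range f)
  let φ : W →ₗ[ℝ] (ι → ℝ) :=
    LinearMap.pi fun i => ((innerSL ℝ (f i)).toLinearMap).comp W.subtype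
  have hinj : Function.Injective φ := by
    rw [← LinearMap.ker_eq_bot, Submodule.eq_bot_iff]
    rintro ⟨w, hw⟩ h
    have h0 : ∀ i, ⟪f i, w⟫ = 0 := fun i => congrFun h i
    have hall : ∀ u ∈ W, ⟪u, w⟫ = 0 := by
      intro u hu
      induction hu using Submodule.span_induction with
      | mem v hv => obtain ⟨i, rfl⟩ := hv; exact h0 i
      | zero => simp
      | add a b _ _ ha hb => rw [inner_add_left, ha, hb]; ring
      | smul r a _ ha => rw [real_inner_smul_left, ha]; ring
    have : w = 0 := (@inner_self_eq_zero ℝ _ _ _ _ w).mp (by simpa [real_inner_comm] using hall w hw)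
    simpa using this
  have hr : Module.finrank ℝ W = Module.finrank ℝ (ι → ℝ) := by
    rw [hW, finrank_span_eq_card hf, Module.finrank_pi]
  obtain ⟨w, hwc⟩ := (LinearMap.injective_iff_surjective_of_finrank_eq_finrank hr).mp hinj c
  refine ⟨w, fun i => ?_⟩
  have := congrFun hwc i
  simpa [φ, real_inner_comm] using this

lemma hplane_convex (a : V) (r : ℝ) : Convex ℝ {v : V | ⟪v, a⟫ = r} := by
  intro x hx y hy p q hp hq hpq
  simp only [Set.mem_setOf_eq] at hx hy ⊢
  rw [inner_add_left, real_inner_smul_left, real_inner_smul_left, hx, hy,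
    ← add_mul, hpq, one_mul]

lemma hull_aux [DecidableEq V] (T : Finset V) (S : Set V)
    (H : ∀ s : V → Bool, ∃ p ∈ S, ∀ b ∈ T, if s b then 1 < ⟪p, b⟫ else ⟪p, b⟫ < 1) :
    ∃ v ∈ convexHull ℝ S, ∀ b ∈ T, ⟪v, b⟫ = 1 := by
  induction T using Finset.induction_on generalizing S with
  | empty =>
    obtain ⟨p, hp, -⟩ := H fun _ => true
    exact ⟨p, subset_convexHull ℝ S hp, by simp⟩
  | @insert a T ha ih =>
    set S' : Set V := {v | v ∈ convexHull ℝ S ∧ ⟪v, a⟫ = 1} with hS'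
    have H' : ∀ s : V → Bool, ∃ p ∈ S', ∀ b ∈ T, if s b then 1 < ⟪p, b⟫ else ⟪p, b⟫ < 1 := by
      intro s
      obtain ⟨p, hp, hps⟩ := H (Function.update s a true)
      obtain ⟨q, hq, hqs⟩ := H (Function.update s a false)
      have hpa : 1 < ⟪p, a⟫ := by
        have := hps a (Finset.mem_insert_self a T); simpa using this
      have hqa : ⟪q, a⟫ < 1 := by
        have := hqs a (Finset.mem_insert_self a T); simpa using this
      set t : ℝ := (⟪p, a⟫ - 1) / (⟪p, a⟫ - ⟪q, a⟫) with hT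
      have hd : 0 < ⟪p, a⟫ - ⟪q, a⟫ := by linarith
      have ht0 : 0 < t := div_pos (by linarith) hd
      have ht1 : t < 1 := (div_lt_one hd).2 (by linarith)
      have hin : ∀ b : V, ⟪(1 - t) • p + t • q, b⟫ = (1 - t) * ⟪p, b⟫ + t * ⟪q, b⟫ := by
        intro b
        rw [inner_add_left, real_inner_smul_left, real_inner_smul_left]
      refine ⟨(1 - t) • p + t • q, ⟨?_, ?_⟩, ?_⟩
      · exact (convex_convexHull ℝ S) (subset_convexHull ℝ S hp) (subset_convexHull ℝ S hq)
          (by linarith) (le_of_lt ht0) (by ring)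
      · rw [hin a, hT]
        field_simp
        ring
      · intro b hb
        have hba : b ≠ a := by rintro rfl; exact ha hb
        have h1 := hps b (Finset.mem_insert_of_mem hb)
        have h2 := hqs b (Finset.mem_insert_of_mem hb)
        rw [Function.update_of_ne hba] at h1 h2
        rw [hin b]
        by_cases hsb : s b
        · rw [if_pos hsb] at h1 h2 ⊢
          nlinarith
        · rw [if_neg hsb] at h1 h2 ⊢
          nlinarith
    obtain ⟨u, hu, huT⟩ := ih S' H'
    have hsub : convexHull ℝ S' ⊆ convexHull ℝ S :=
      convexHull_min (fun v hv => hv.1) (convex_convexHull ℝ S)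
    have hua : ⟪u, a⟫ = 1 :=
      convexHull_min (fun v hv => hv.2) (hplane_convex a 1) hu
    refine ⟨u, hsub hu, fun b hb => ?_⟩
    rcases Finset.mem_insert.1 hb with rfl | hb'
    · exact hua
    · exact huT b hb'

theorem stmt15 [DecidableEq V] (Λ : Finset V) (hcard : 2 ≤ Λ.card)
    (hind : LinearIndependent ℝ (fun x : (Λ : Set V) => (x : V)))
    (γ : V) (hγ : γ ∈ Λ) (vA : Set V → V)
    (hvA : ∀ A : Set V,
      (∃ x ∈ hyperU (Λ.erase γ), A = connectedComponentIn (hyperU (Λ.erase γ)) x) →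
      vA A ∈ A ∧ ⟪vA A, γ⟫ = 1) :
    Set.Nonempty ({v : V | ∀ β ∈ Λ, ⟪v, β⟫ = 1} ∩
      convexHull ℝ (vA ''
        {A : Set V | ∃ x ∈ hyperU (Λ.erase γ),
          A = connectedComponentIn (hyperU (Λ.erase γ)) x})) := by
  classical
  set U : Set V := hyperU (Λ.erase γ) with hU
  set S : Set V := vA '' {A : Set V | ∃ x ∈ U, A = connectedComponentIn U x} with hS
  have hmemU : ∀ v : V, v ∈ U ↔ ∀ b ∈ Λ.erase γ, ⟪v, b⟫ ≠ 1 := by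
    intro v
    simp [hU, hyperU]
  have hindE : LinearIndependent ℝ
      (fun x : ((Λ.erase γ : Finset V) : Set V) => (x : V)) :=
    LinearIndepOn.mono (s := (Λ : Set V)) (v := id) hind (by exact_mod_cast Finset.erase_subset γ Λ)
  have H : ∀ s : V → Bool, ∃ p ∈ S, ∀ b ∈ Λ.erase γ,
      if s b then 1 < ⟪p, b⟫ else ⟪p, b⟫ < 1 := by
    intro s
    obtain ⟨x, hx⟩ := exists_inner_eq_aux
      (fun b : ((Λ.erase γ : Finset V) : Set V) => (b : V)) hindE
      (fun b => if s (b : V) then 2 else 0)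
    have hx' : ∀ b ∈ Λ.erase γ, ⟪x, b⟫ = if s b then 2 else 0 := by
      intro b hb
      exact hx ⟨b, by exact_mod_cast hb⟩
    have hxU : x ∈ U := by
      rw [hmemU]
      intro b hb
      rw [hx' b hb]
      split <;> norm_num
    have hAmem : connectedComponentIn U x ∈
        {A : Set V | ∃ x ∈ U, A = connectedComponentIn U x} := ⟨x, hxU, rfl⟩
    obtain ⟨hpA, -⟩ := hvA _ hAmem
    refine ⟨vA (connectedComponentIn U x), ⟨_, hAmem, rfl⟩, ?_⟩
    intro b hb
    have hAU : connectedComponentIn U x ⊆ U := connectedComponentIn_subset U x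
    have hxA : x ∈ connectedComponentIn U x := mem_connectedComponentIn hxU
    have hpre : IsPreconnected (connectedComponentIn U x) := isPreconnected_connectedComponentIn
    have hcont : ContinuousOn (fun v : V => ⟪v, b⟫) (connectedComponentIn U x) :=
      (continuous_id.inner continuous_const).continuousOn
    have hpb : ⟪vA (connectedComponentIn U x), b⟫ ≠ 1 := (hmemU _).1 (hAU hpA) b hb
    have hxb := hx' b hb
    by_cases hsb : s b
    · rw [if_pos hsb] at hxb ⊢
      by_contra hle
      push_neg at hle
      obtain ⟨y, hyA, hy⟩ := hpre.intermediate_value hpA hxA hcont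
        ⟨hle, by rw [hxb]; norm_num⟩
      exact (hmemU y).1 (hAU hyA) b hb hy
    · rw [if_neg hsb] at hxb ⊢
      by_contra hle
      push_neg at hle
      obtain ⟨y, hyA, hy⟩ := hpre.intermediate_value hxA hpA hcont
        ⟨by rw [hxb]; norm_num, hle⟩
      exact (hmemU y).1 (hAU hyA) b hb hy
  obtain ⟨v, hv, hvT⟩ := hull_aux (Λ.erase γ) S H
  have hvγ : ⟪v, γ⟫ = 1 := by
    refine convexHull_min ?_ (hplane_convex γ 1) hv
    rintro p ⟨A, hA, rfl⟩
    exact (hvA A hA).2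
  refine ⟨v, ?_, hv⟩
  intro β hβ
  rcases eq_or_ne β γ with rfl | hne
  · exact hvγ
  · exact hvT β (Finset.mem_erase.2 ⟨hne, hβ⟩)
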